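/- The projective curve over F_2 defined by C_1 = 0 and Q_1 + L(0,0,1,1)^2 = 0 has a point of degree at most 3: there exists a nonzero vector (a1,a2,a3,a4) with entries in F_4 or with entries in F_8 satisfying C_1(a1,a2,a3,a4) = 0 and Q_1(a1,a2,a3,a4) + (a3 + a4)^2 = 0. -/

import Mathlib

theorem curve_C1_case_5_has_low_degree_point :
    (∃ a1 a2 a3 a4 : GaloisField 2 2,
      (¬ (a1 = 0 ∧ a2 = 0 ∧ a3 = 0 ∧ a4 = 0)) ∧
      a2^3 + a1*a3^2 + a4^3 + a1^2*a3 + a3*a4^2 = 0 ∧ a1*a2 + a3*a4 + (a3 + a4)^2 = 0) ∨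
    (∃ a1 a2 a3 a4 : GaloisField 2 3,
      (¬ (a1 = 0 ∧ a2 = 0 ∧ a3 = 0 ∧ a4 = 0)) ∧
      a2^3 + a1*a3^2 + a4^3 + a1^2*a3 + a3*a4^2 = 0 ∧ a1*a2 + a3*a4 + (a3 + a4)^2 = 0) := by
  left
  refine ⟨1, 1, 0, 1, ?_, ?_, ?_⟩
  · intro h
    exact one_ne_zero h.1
  · have h2 : (2 : GaloisField 2 2) = 0 := by
      haveI : CharP (GaloisField 2 2) 2 := inferInstance
      exact_mod_cast CharP.cast_eq_zero (GaloisField 2 2) 2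
    ring_nf
    linear_combination h2
  · have h2 : (2 : GaloisField 2 2) = 0 := by
      haveI : CharP (GaloisField 2 2) 2 := inferInstance
      exact_mod_cast CharP.cast_eq_zero (GaloisField 2 2) 2
    ring_nf
    linear_combination h2
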